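/- Assume R is integrable and R̄ > 0. Then ((1/V) ∫_M √R dμ)² ≥ R̄ − (1/√R̄) · ((1/V) ∫_M |R − R̄| dμ) · ((1/V) ∫_M √R dμ + √R̄); in particular, since (1/V)∫_M √R dμ ≤ √R̄ by the Cauchy–Schwarz inequality, ((1/V) ∫_M √R dμ)² ≥ R̄ − 2·(1/V) ∫_M |R − R̄| dμ. (This is the intermediate estimate (6.B) in the proof of Theorem 6.3 of the paper, where R is the scalar curvature and it yields ‖H‖₁² ≥ R̄/(n(n−1)) − c_n‖Ric − (R̄/n)g‖₁.) -/

import Mathlib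

open MeasureTheory

/-- The intermediate estimate (6.B) in the proof of Theorem 6.3:
`((1/V)∫√R)² ≥ R̄ − (1/√R̄)·((1/V)∫|R−R̄|)·((1/V)∫√R + √R̄)`, and in particular
`((1/V)∫√R)² ≥ R̄ − 2·(1/V)∫|R−R̄|`. -/
theorem sqrt_scalar_curvature_estimate
    {M : Type*} [MeasurableSpace M] (μ : Measure M) [IsFiniteMeasure μ]
    (hμ : μ Set.univ ≠ 0) (R : M → ℝ) (hRm : Measurable R)
    (hR0 : ∀ᵐ x ∂μ, 0 ≤ R x) (hRint : Integrable R μ)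
    (V : ℝ) (hV : V = (μ Set.univ).toReal)
    (Rbar : ℝ) (hRbar : Rbar = (1 / V) * ∫ x, R x ∂μ) (hRbarpos : 0 < Rbar) :
    ((1 / V) * ∫ x, Real.sqrt (R x) ∂μ) ^ 2 ≥
        Rbar - (1 / Real.sqrt Rbar) * ((1 / V) * ∫ x, |R x - Rbar| ∂μ) *
          ((1 / V) * ∫ x, Real.sqrt (R x) ∂μ + Real.sqrt Rbar) ∧
      ((1 / V) * ∫ x, Real.sqrt (R x) ∂μ) ^ 2 ≥
        Rbar - 2 * ((1 / V) * ∫ x, |R x - Rbar| ∂μ) := by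
  have hVpos : 0 < V := by
    rw [hV]
    exact ENNReal.toReal_pos hμ (measure_ne_top μ _)
  set s := Real.sqrt Rbar with hs
  have hspos : 0 < s := Real.sqrt_pos.mpr hRbarpos
  have hssq : s ^ 2 = Rbar := Real.sq_sqrt hRbarpos.le
  set A := (1 / V) * ∫ x, Real.sqrt (R x) ∂μ with hA
  set I := (1 / V) * ∫ x, |R x - Rbar| ∂μ with hI
  -- integrability of √R
  have hsqrtInt : Integrable (fun x => Real.sqrt (R x)) μ := by
    refine Integrable.mono (hRint.add (integrable_const 1))
      hRm.sqrt.aestronglyMeasurable ?_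
    filter_upwards [hR0] with x hx
    simp only [Pi.add_apply, Real.norm_eq_abs, abs_of_nonneg (Real.sqrt_nonneg _)]
    have h1 : Real.sqrt (R x) ≤ R x + 1 := by
      nlinarith [Real.sq_sqrt hx, Real.sqrt_nonneg (R x)]
    have h2 : R x + 1 ≤ |R x + 1| := le_abs_self _
    linarith
  have habsInt : Integrable (fun x => |R x - Rbar|) μ := (hRint.sub (integrable_const Rbar)).abs
  have hA0 : 0 ≤ A := by
    apply mul_nonneg (by positivity)
    exact integral_nonneg fun x => Real.sqrt_nonneg _
  have hI0 : 0 ≤ I := by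
    apply mul_nonneg (by positivity)
    exact integral_nonneg fun x => abs_nonneg _
  -- key estimate : s - A ≤ I / s
  have hkey : s - A ≤ I / s := by
    have hpt : ∀ᵐ x ∂μ, s - Real.sqrt (R x) ≤ |R x - Rbar| / s := by
      filter_upwards [hR0] with x hx
      set q := Real.sqrt (R x) with hq
      have hq0 : 0 ≤ q := Real.sqrt_nonneg _
      have hqsq : q ^ 2 = R x := Real.sq_sqrt hx
      have habs : Rbar - R x ≤ |R x - Rbar| := by
        rw [abs_sub_comm]; exact le_abs_self _
      rw [le_div_iff₀ hspos]
      rcases le_or_gt q s with h | h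
      · nlinarith [abs_nonneg (R x - Rbar)]
      · nlinarith [abs_nonneg (R x - Rbar)]
    have hint : ∫ x, (s - Real.sqrt (R x)) ∂μ ≤ ∫ x, |R x - Rbar| / s ∂μ :=
      integral_mono_ae ((integrable_const s).sub hsqrtInt) (habsInt.div_const s) hpt
    have h1 : ∫ x, (s - Real.sqrt (R x)) ∂μ = V * s - ∫ x, Real.sqrt (R x) ∂μ := by
      rw [integral_sub (integrable_const s) hsqrtInt, integral_const, hV, smul_eq_mul]; rfl
    have h2 : ∫ x, |R x - Rbar| / s ∂μ = (∫ x, |R x - Rbar| ∂μ) / s := integral_div _ _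
    rw [h1, h2] at hint
    have := mul_le_mul_of_nonneg_left hint (by positivity : (0:ℝ) ≤ 1 / V)
    have hVne : V ≠ 0 := hVpos.ne'
    have hsne : s ≠ 0 := hspos.ne'
    calc s - A = (1 / V) * (V * s - ∫ x, Real.sqrt (R x) ∂μ) := by
          rw [hA, mul_sub, ← mul_assoc, one_div_mul_cancel hVne, one_mul]
      _ ≤ (1 / V) * ((∫ x, |R x - Rbar| ∂μ) / s) := this
      _ = I / s := by rw [hI]; ring
  have hfirst : A ^ 2 ≥ Rbar - (1 / s) * I * (A + s) := by
    have h := mul_le_mul_of_nonneg_right hkey (by linarith : (0:ℝ) ≤ s + A)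
    have hsne : s ≠ 0 := hspos.ne'
    have hdiv : I / s * (s + A) = (1 / s) * I * (A + s) := by ring
    nlinarith [h]
  refine ⟨hfirst, ?_⟩
  rcases le_or_gt A s with h | h
  · have h2 : (1 / s) * I * (A + s) ≤ 2 * I := by
      have : A + s ≤ 2 * s := by linarith
      have hle : (1 / s) * I * (A + s) ≤ (1 / s) * I * (2 * s) :=
        mul_le_mul_of_nonneg_left this (by positivity)
      have heq : (1 / s) * I * (2 * s) = 2 * I := by field_simp
      linarith [hle, heq ▸ hle]
    linarith [hfirst]
  · have : A ^ 2 ≥ Rbar := by nlinarith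
    linarith
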